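/- For any register protocol with initial location q0 and initial register value d0, the set Post*(↑{⟨q0, d0⟩}) of configurations reachable from the upward closure of {⟨q0, d0⟩} (equivalently, reachable from some initial configuration ⟨q0^k, d0⟩ with k ≥ 1) is upward-closed with respect to the order ⪯. -/

import Mathlib

/-- Operation type of a register protocol: read or write. -/
inductive Op : Type
  | R : Op
  | W : Op
deriving DecidableEq

instance : Fintype Op :=
  ⟨{Op.R, Op.W}, fun x => by cases x <;> simp⟩

/-- A location has at least one outgoing transition. -/
def Nonblock {Q D : Type*} (T : Set (Q × Op × D × Q)) : Prop :=
  ∀ q : Q, ∃ op d q', (q, op, d, q') ∈ T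

/-- Whenever a read transition exists from `q`, reads of every datum are enabled in `q`. -/
def ReadTotal {Q D : Type*} (T : Set (Q × Op × D × Q)) : Prop :=
  ∀ q d' q', (q, Op.R, d', q') ∈ T → ∀ d : D, ∃ qd, (q, Op.R, d, qd) ∈ T

/-- One step of the distributed system associated with transition set `T`:
a configuration is a pair of a finite multiset of locations and a register datum. -/
def IsStep {Q D : Type*} [DecidableEq Q] (T : Set (Q × Op × D × Q)) :
    Multiset Q × D → Multiset Q × D → Prop := fun γ γ' =>
  ∃ q op d'' q', (q, op, d'', q') ∈ T ∧ q ∈ γ.1 ∧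
    γ'.1 = γ.1 - {q} + {q'} ∧
    ((op = Op.R ∧ γ.2 = d'' ∧ γ'.2 = d'') ∨ (op = Op.W ∧ γ'.2 = d''))

/-- Reachability: reflexive-transitive closure of the step relation. -/
def Reach {Q D : Type*} [DecidableEq Q] (T : Set (Q × Op × D × Q)) :
    Multiset Q × D → Multiset Q × D → Prop :=
  Relation.ReflTransGen (IsStep T)

/-- `PostStar T S` is the set of configurations reachable from some configuration of `S`. -/
def PostStar {Q D : Type*} [DecidableEq Q] (T : Set (Q × Op × D × Q))
    (S : Set (Multiset Q × D)) : Set (Multiset Q × D) :=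
  {γ' | ∃ γ ∈ S, Reach T γ γ'}

/-- `PreStar T S` is the set of configurations from which some configuration of `S`
is reachable. -/
def PreStar {Q D : Type*} [DecidableEq Q] (T : Set (Q × Op × D × Q))
    (S : Set (Multiset Q × D)) : Set (Multiset Q × D) :=
  {γ | ∃ γ' ∈ S, Reach T γ γ'}

/-- `[qf]`: configurations containing at least one process in location `qf`. -/
def TargetSet {Q D : Type*} [DecidableEq Q] (qf : Q) : Set (Multiset Q × D) :=
  {γ | 0 < γ.1.count qf}

/-- The order `⪯` on configurations: same register content, same support,
and componentwise smaller multiset. -/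
def ConfLE {Q D : Type*} [DecidableEq Q] (γ γ' : Multiset Q × D) : Prop :=
  γ.2 = γ'.2 ∧ γ.1.toFinset = γ'.1.toFinset ∧ γ.1 ≤ γ'.1

/-- Upward closure of a set of configurations with respect to `⪯`. -/
def UpSet {Q D : Type*} [DecidableEq Q] (B : Set (Multiset Q × D)) :
    Set (Multiset Q × D) :=
  {γ' | ∃ γ ∈ B, ConfLE γ γ'}

lemma ms_eq {Q : Type*} [DecidableEq Q] (M : Multiset Q) (q q'' qn : Q) (hq : q ∈ M) :
    M - {q} + {qn} + {q''} = (M + {q''}) - {q} + {qn} := by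
  have h1 : 1 ≤ M.count q := Multiset.one_le_count_iff_mem.mpr hq
  ext a
  simp only [Multiset.count_add, Multiset.count_sub, Multiset.count_singleton]
  by_cases h2 : a = q <;> by_cases h3 : a = q'' <;> by_cases h4 : a = qn <;>
    simp_all <;> omega

lemma reach_add_one {Q D : Type*} [DecidableEq Q] (T : Set (Q × Op × D × Q))
    {a b : Multiset Q × D} (h : Reach T a b) :
    ∀ q' ∈ b.1, ∃ q ∈ a.1, Reach T (a.1 + {q}, a.2) (b.1 + {q'}, b.2) := by
  induction h with
  | refl => intro q' hq'; exact ⟨q', hq', Relation.ReflTransGen.refl⟩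
  | tail hab hbc ih =>
    rename_i b c
    intro q'' hq''
    obtain ⟨q, op, d'', qn, hT, hqb, hc1, hreg⟩ := hbc
    have hmem : q'' ∈ b.1 ∨ q'' = qn := by
      rw [hc1, Multiset.mem_add] at hq''
      rcases hq'' with h | h
      · exact Or.inl (Multiset.mem_of_le tsub_le_self h)
      · exact Or.inr (Multiset.mem_singleton.mp h)
    rcases hmem with hmem | rfl
    · obtain ⟨p, hpa, hr⟩ := ih q'' hmem
      refine ⟨p, hpa, hr.tail ?_⟩
      refine ⟨q, op, d'', qn, hT, Multiset.mem_add.mpr (Or.inl hqb), ?_, hreg⟩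
      show c.1 + {q''} = (b.1 + {q''}) - {q} + {qn}
      rw [hc1]; exact ms_eq b.1 q q'' qn hqb
    · obtain ⟨p, hpa, hr⟩ := ih q hqb
      have hc2 : (op = Op.R ∧ c.2 = d'' ∧ c.2 = d'') ∨ (op = Op.W ∧ c.2 = d'') := by
        rcases hreg with ⟨h1, h2, h3⟩ | ⟨h1, h2⟩
        · exact Or.inl ⟨h1, h3, h3⟩
        · exact Or.inr ⟨h1, h2⟩
      refine ⟨p, hpa, Relation.ReflTransGen.tail (Relation.ReflTransGen.tail (c := (c.1 + {q}, c.2)) hr ?_) ?_⟩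
      · refine ⟨q, op, d'', q'', hT, Multiset.mem_add.mpr (Or.inl hqb), ?_, hreg⟩
        show c.1 + {q} = (b.1 + {q}) - {q} + {q''}
        rw [hc1]; exact ms_eq b.1 q q q'' hqb
      · refine ⟨q, op, d'', q'', hT, Multiset.mem_add.mpr (Or.inr (Multiset.mem_singleton.mpr rfl)), ?_, hc2⟩
        show c.1 + {q''} = (c.1 + {q}) - {q} + {q''}
        ext a
        simp only [Multiset.count_add, Multiset.count_sub, Multiset.count_singleton]
        by_cases h2 : a = q <;> by_cases h4 : a = q'' <;> simp_all <;> omega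

lemma reach_add {Q D : Type*} [DecidableEq Q] (T : Set (Q × Op × D × Q))
    {a b : Multiset Q × D} (h : Reach T a b) (ν : Multiset Q)
    (hν : ∀ q ∈ ν, q ∈ b.1) :
    ∃ σ : Multiset Q, (∀ q ∈ σ, q ∈ a.1) ∧
      Reach T (a.1 + σ, a.2) (b.1 + ν, b.2) := by
  induction ν using Multiset.induction with
  | empty => exact ⟨0, by simp, by simpa using h⟩
  | cons q'' ν ih =>
    obtain ⟨σ, hσ, hr⟩ := ih (fun q hq => hν q (Multiset.mem_cons_of_mem hq))
    have hq'' : q'' ∈ b.1 + ν :=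
      Multiset.mem_add.mpr (Or.inl (hν q'' (Multiset.mem_cons_self _ _)))
    obtain ⟨p, hpa, hr2⟩ := reach_add_one T hr q'' hq''
    refine ⟨σ + {p}, ?_, ?_⟩
    · intro q hq
      rcases Multiset.mem_add.mp hq with h | h
      · exact hσ q h
      · rw [Multiset.mem_singleton.mp h]
        rcases Multiset.mem_add.mp hpa with h | h
        · exact h
        · exact hσ p h
    · have : b.1 + (q'' ::ₘ ν) = b.1 + ν + {q''} := by
        ext x; simp [Multiset.count_cons, Multiset.count_singleton]
      rw [this, ← add_assoc]
      exact hr2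

/-- `Post*(↑{⟨q0, d0⟩})` is upward-closed for `⪯`. -/
theorem stmt_4 {Q D : Type*} [DecidableEq Q]
    (T : Set (Q × Op × D × Q)) (hnb : Nonblock T) (hrt : ReadTotal T)
    (q0 : Q) (d0 : D)
    (γ γ' : Multiset Q × D)
    (hγ : γ ∈ PostStar T (UpSet {(({q0} : Multiset Q), d0)}))
    (hle : ConfLE γ γ') :
    γ' ∈ PostStar T (UpSet {(({q0} : Multiset Q), d0)}) := by
  obtain ⟨γ0, hγ0, hr⟩ := hγ
  obtain ⟨β, hβ, hd, hfin, hle0⟩ := hγ0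
  rw [Set.mem_singleton_iff] at hβ
  subst hβ
  obtain ⟨hd', hfin', hle'⟩ := hle
  set ν := γ'.1 - γ.1 with hν
  have hνsub : ∀ q ∈ ν, q ∈ γ.1 := by
    intro q hq
    have : q ∈ γ'.1 := Multiset.mem_of_le tsub_le_self hq
    rw [← Multiset.mem_toFinset, ← hfin', Multiset.mem_toFinset] at this
    exact this
  obtain ⟨σ, hσ, hreach⟩ := reach_add T hr ν hνsub
  have hσq0 : ∀ q ∈ σ, q = q0 := by
    intro q hq
    have := hσ q hq
    rw [← Multiset.mem_toFinset, ← hfin, Multiset.mem_toFinset,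
      Multiset.mem_singleton] at this
    exact this
  refine ⟨(γ0.1 + σ, γ0.2), ⟨({q0}, d0), rfl, ?_, ?_, ?_⟩, ?_⟩
  · exact hd
  · ext x
    simp only [Multiset.mem_toFinset, Multiset.mem_add]
    constructor
    · intro h; rw [Multiset.mem_singleton] at h; subst h
      left
      rw [← Multiset.mem_toFinset, ← hfin]; simp
    · rintro (h | h)
      · rw [← Multiset.mem_toFinset, ← hfin] at h; simpa using h
      · rw [Multiset.mem_singleton]; exact hσq0 x h
  · exact le_trans hle0 (Multiset.le_add_right _ _)
  · have h1 : γ.1 + ν = γ'.1 := add_tsub_cancel_of_le hle'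
    have : (γ.1 + ν, γ.2) = γ' := by rw [h1, hd']
    rwa [this] at hreach
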